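/- Let p(t) = ∑_{i=0}^{μ} c′_i t^i ∈ ℚ[t] be any polynomial of degree μ ≥ 1 with p(0) = 1 satisfying t^{μ}·p(1/t) = ε·p(t) for some ε ∈ {1, −1}. Let c_i be the coefficients of the power series 1/p(t) = ∑_{i≥0} c_i t^i ∈ ℚ[[t]], let N be the μ × μ matrix with (N)_{i,i+1} = 1 and all other entries 0, set χ := ∑_{i=0}^{μ−1} c_i N^i, and let M_1 be the μ × μ matrix whose (i,1)-entry is −c′_i for 1 ≤ i ≤ μ, whose (i,i+1)-entries are 1 for 1 ≤ i ≤ μ − 1, and all other entries 0. Then χ · M_1^{μ} = −ε · χ^T. -/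

import Mathlib

open Finset Matrix Polynomial FreeAbelianGroup

/-- `d k = a 1 * a 2 * ⋯ * a k`, with `d 0 = 1`. -/
def chainD (a : ℕ → ℕ) (k : ℕ) : ℕ := ∏ i ∈ Finset.Icc 1 k, a i

/-- `μ̃ 0 = 1`, `μ̃ k = d k - μ̃ (k-1)`. -/
def chainMu (a : ℕ → ℕ) : ℕ → ℤ
  | 0 => 1
  | k + 1 => (chainD a (k + 1) : ℤ) - chainMu a k

/-- `φ_n(t) = ∏_{i=0}^{n} (1 - t^{d_i})^{(-1)^{n-i}}` as a rational function over `ℚ`. -/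
noncomputable def chainPhi (a : ℕ → ℕ) (n : ℕ) : RatFunc ℚ :=
  ∏ i ∈ Finset.range (n + 1),
    ((1 : RatFunc ℚ) - RatFunc.X ^ (chainD a i)) ^ ((-1 : ℤ) ^ (n - i))

/-- the regular nilpotent `μ × μ` matrix -/
def nilpN (μ : ℕ) : Matrix (Fin μ) (Fin μ) ℚ :=
  Matrix.of fun i j => if (j : ℕ) = (i : ℕ) + 1 then 1 else 0

/-- `χ = ∑_{i=0}^{μ-1} c_i N^i` -/
noncomputable def chiMat (μ : ℕ) (c : ℕ → ℚ) : Matrix (Fin μ) (Fin μ) ℚ :=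
  ∑ i ∈ Finset.range μ, c i • (nilpN μ) ^ i

/-- the companion-type matrix `M₁`: `(M₁)_{i,1} = -c'_i`, `(M₁)_{i,i+1} = 1` (1-based). -/
def M1mat (μ : ℕ) (c' : ℕ → ℚ) : Matrix (Fin μ) (Fin μ) ℚ :=
  Matrix.of fun i j =>
    (if (j : ℕ) = 0 then -c' ((i : ℕ) + 1) else 0) +
    (if (j : ℕ) = (i : ℕ) + 1 then 1 else 0)

/- ------------------- auxiliary material ------------------- -/

noncomputable def extQ (c : ℕ → ℚ) : ℤ → ℚ := fun z => if 0 ≤ z then c z.toNat else 0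

lemma extQ_ofNat (c : ℕ → ℚ) (n : ℕ) : extQ c n = c n := by simp [extQ]

lemma extQ_neg (c : ℕ → ℚ) (z : ℤ) (h : z < 0) : extQ c z = 0 := by
  simp [extQ, not_le.mpr h]

lemma conv' (p : Polynomial ℚ) (hp0 : p.coeff 0 = 1) (c : ℕ → ℚ)
    (hc : ∀ i, c i = PowerSeries.coeff i ((p : PowerSeries ℚ)⁻¹)) (n : ℕ) :
    ∑ m ∈ Finset.range (n + 1), c m * p.coeff (n - m) = if n = 0 then 1 else 0 := by
  have hmul : (p : PowerSeries ℚ)⁻¹ * (p : PowerSeries ℚ) = 1 := by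
    rw [mul_comm]
    apply PowerSeries.mul_inv_cancel
    rw [← PowerSeries.coeff_zero_eq_constantCoeff, Polynomial.coeff_coe, hp0]
    exact one_ne_zero
  have := congrArg (PowerSeries.coeff n) hmul
  rw [PowerSeries.coeff_mul, PowerSeries.coeff_one,
    Finset.Nat.sum_antidiagonal_eq_sum_range_succ_mk] at this
  rw [← this]
  refine Finset.sum_congr rfl fun m _ => ?_
  rw [hc m, Polynomial.coeff_coe]

lemma c_zero (p : Polynomial ℚ) (hp0 : p.coeff 0 = 1) (c : ℕ → ℚ)
    (hc : ∀ i, c i = PowerSeries.coeff i ((p : PowerSeries ℚ)⁻¹)) : c 0 = 1 := by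
  have := conv' p hp0 c hc 0
  simpa [hp0] using this

lemma S1lem (μ : ℕ) (p : Polynomial ℚ) (hp0 : p.coeff 0 = 1)
    (ε : ℚ)
    (hpal : ∀ i, i ≤ μ → p.coeff (μ - i) = ε * p.coeff i)
    (c : ℕ → ℚ)
    (hc : ∀ i, c i = PowerSeries.coeff i ((p : PowerSeries ℚ)⁻¹))
    (k i : ℕ) :
    ∑ m ∈ Finset.range μ, extQ c ((m : ℤ) - k - i) * p.coeff (m + 1)
      = ε * (if k + i + 1 = μ then 1 else 0) := by
  by_cases hki : k + i < μ
  · have hsub : Finset.Ico (k + i) μ ⊆ Finset.range μ := by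
      intro x hx; simp only [Finset.mem_Ico] at hx; exact Finset.mem_range.mpr hx.2
    rw [← Finset.sum_subset hsub (fun x hx hx2 => by
      rw [extQ_neg, zero_mul]
      simp only [Finset.mem_range, Finset.mem_Ico, not_and, not_le] at hx hx2
      omega)]
    rw [Finset.sum_Ico_eq_sum_range]
    set s := μ - (k + i) - 1 with hs
    have hrange : μ - (k + i) = s + 1 := by omega
    rw [hrange]
    have key : ∀ r ∈ Finset.range (s + 1),
        extQ c (((k + i + r : ℕ) : ℤ) - k - i) * p.coeff (k + i + r + 1)
          = ε * (c r * p.coeff (s - r)) := by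
      intro r hr
      rw [Finset.mem_range] at hr
      have h1 : ((k + i + r : ℕ) : ℤ) - k - i = (r : ℤ) := by push_cast; ring
      rw [h1, extQ_ofNat]
      have h2 : p.coeff (k + i + r + 1) = ε * p.coeff (s - r) := by
        have := hpal (s - r) (by omega)
        rw [show μ - (s - r) = k + i + r + 1 by omega] at this
        exact this
      rw [h2]; ring
    rw [Finset.sum_congr rfl key, ← Finset.mul_sum, conv' p hp0 c hc s]
    congr 1
    have hiff : (s = 0) ↔ (k + i + 1 = μ) := by omega
    simp only [hiff]
  · rw [Finset.sum_eq_zero, if_neg (by omega), mul_zero]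
    intro m hm
    rw [Finset.mem_range] at hm
    rw [extQ_neg _ _ (by omega), zero_mul]

lemma S2lem (μ : ℕ) (p : Polynomial ℚ) (hp0 : p.coeff 0 = 1)
    (c : ℕ → ℚ)
    (hc : ∀ i, c i = PowerSeries.coeff i ((p : PowerSeries ℚ)⁻¹))
    (k i : ℕ) (hk : k ≤ μ) (hi : i < μ) (hik : μ ≤ i + k) :
    ∑ m ∈ Finset.range μ, extQ c ((i : ℤ) + k - μ - m) * p.coeff (m + 1)
      = -c (i + k + 1 - μ) := by
  set s := i + k - μ with hs
  have hsμ : s + 1 ≤ μ := by omega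
  have hsub : Finset.range (s + 1) ⊆ Finset.range μ :=
    Finset.range_subset_range.mpr hsμ
  rw [← Finset.sum_subset hsub (fun x hx hx2 => by
    rw [extQ_neg, zero_mul]
    simp only [Finset.mem_range, not_lt] at hx hx2
    omega)]
  have hre : ∀ m ∈ Finset.range (s + 1),
      extQ c ((i : ℤ) + k - μ - m) * p.coeff (m + 1)
        = c (s - m) * p.coeff (s + 1 - (s - m)) := by
    intro m hm
    rw [Finset.mem_range] at hm
    have h1 : (i : ℤ) + k - μ - m = ((s - m : ℕ) : ℤ) := by push_cast; omega
    rw [h1, extQ_ofNat]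
    congr 2
    omega
  rw [Finset.sum_congr rfl hre]
  have reflect := Finset.sum_range_reflect (fun b => c b * p.coeff (s + 1 - b)) (s + 1)
  simp only [Nat.add_sub_cancel] at reflect
  rw [reflect]
  have := conv' p hp0 c hc (s + 1)
  rw [Finset.sum_range_succ, if_neg (by omega)] at this
  rw [Nat.sub_self, hp0, mul_one] at this
  have h2 : i + k + 1 - μ = s + 1 := by omega
  rw [h2]
  linarith [this]

noncomputable def Amat (μ k : ℕ) (ε : ℚ) (c : ℕ → ℚ) : Matrix (Fin μ) (Fin μ) ℚ :=
  Matrix.of fun i j =>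
    extQ c ((j : ℤ) - k - i) - ε * extQ c ((i : ℤ) + k - μ - j)

lemma nilpN_pow (μ k : ℕ) : (nilpN μ) ^ k =
    Matrix.of fun i j : Fin μ => if (j : ℕ) = (i : ℕ) + k then 1 else 0 := by
  induction k with
  | zero =>
    ext i j
    simp [Matrix.one_apply, Fin.ext_iff, eq_comm]
  | succ k ih =>
    ext i j
    rw [pow_succ, ih, Matrix.mul_apply]
    simp only [Matrix.of_apply, nilpN]
    by_cases hik : (i : ℕ) + k < μ
    · rw [Finset.sum_eq_single (⟨(i : ℕ) + k, hik⟩ : Fin μ)]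
      · simp [eq_comm, Nat.add_assoc]
      · intro b _ hb
        rw [if_neg, zero_mul]
        intro hbc
        exact hb (Fin.ext hbc)
      · simp
    · rw [Finset.sum_eq_zero, eq_comm, if_neg]
      · omega
      · intro b _
        rw [if_neg, zero_mul]
        omega

lemma chiMat_apply (μ : ℕ) (c : ℕ → ℚ) (i j : Fin μ) :
    chiMat μ c i j = extQ c ((j : ℤ) - (i : ℤ)) := by
  simp only [chiMat, Matrix.sum_apply, Matrix.smul_apply, nilpN_pow, Matrix.of_apply,
    smul_eq_mul]
  by_cases hij : (i : ℕ) ≤ (j : ℕ)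
  · rw [Finset.sum_eq_single ((j : ℕ) - (i : ℕ))]
    · rw [if_pos (by omega), mul_one, extQ, if_pos (by omega)]
      congr 1
      omega
    · intro b _ hb
      rw [if_neg (by omega), mul_zero]
    · intro h
      exact absurd (Finset.mem_range.mpr (by omega)) h
  · rw [Finset.sum_eq_zero, eq_comm, extQ_neg _ _ (by omega)]
    intro b _
    rw [if_neg (by omega), mul_zero]

lemma Amat_zero (μ : ℕ) (ε : ℚ) (c : ℕ → ℚ) : Amat μ 0 ε c = chiMat μ c := by
  ext i j
  rw [Amat, Matrix.of_apply, chiMat_apply]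
  simp only [Nat.cast_zero]
  rw [extQ_neg c ((i : ℤ) + 0 - μ - j) (by have := i.isLt; omega), mul_zero, sub_zero,
    sub_zero]

lemma Amat_mu (μ : ℕ) (ε : ℚ) (c : ℕ → ℚ) :
    Amat μ μ ε c = (-ε) • (chiMat μ c)ᵀ := by
  ext i j
  rw [Amat, Matrix.of_apply, Matrix.smul_apply, Matrix.transpose_apply, chiMat_apply,
    extQ_neg c ((j : ℤ) - μ - i) (by have := j.isLt; omega)]
  rw [show (i : ℤ) + μ - μ - j = (i : ℤ) - j by ring]
  simp [smul_eq_mul]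

lemma Amat_step (μ : ℕ) (p : Polynomial ℚ) (hp0 : p.coeff 0 = 1)
    (ε : ℚ)
    (hpal : ∀ i, i ≤ μ → p.coeff (μ - i) = ε * p.coeff i)
    (c : ℕ → ℚ)
    (hc : ∀ i, c i = PowerSeries.coeff i ((p : PowerSeries ℚ)⁻¹))
    (k : ℕ) (hk : k < μ) :
    Amat μ k ε c * M1mat μ (fun i => p.coeff i) = Amat μ (k + 1) ε c := by
  have hc0 : c 0 = 1 := c_zero p hp0 c hc
  ext i j
  rw [Matrix.mul_apply]
  simp only [Amat, M1mat, Matrix.of_apply]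
  by_cases hj : (j : ℕ) = 0
  · have hsplit : ∀ m : Fin μ,
        (extQ c ((m : ℤ) - k - i) - ε * extQ c ((i : ℤ) + k - μ - m)) *
          ((if (j : ℕ) = 0 then -p.coeff ((m : ℕ) + 1) else 0) +
            (if (j : ℕ) = (m : ℕ) + 1 then 1 else 0))
        = -(extQ c ((m : ℤ) - k - i) * p.coeff ((m : ℕ) + 1))
          + ε * (extQ c ((i : ℤ) + k - μ - m) * p.coeff ((m : ℕ) + 1)) := by
      intro m
      rw [if_pos hj, if_neg (by omega)]
      ring
    rw [Finset.sum_congr rfl (fun m _ => hsplit m), Finset.sum_add_distrib,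
      Finset.sum_neg_distrib, ← Finset.mul_sum]
    rw [Fin.sum_univ_eq_sum_range (fun m => extQ c ((m : ℤ) - k - i) * p.coeff (m + 1)) μ,
      Fin.sum_univ_eq_sum_range (fun m => extQ c ((i : ℤ) + k - μ - m) * p.coeff (m + 1)) μ]
    rw [S1lem μ p hp0 ε hpal c hc k i]
    rw [extQ_neg c ((j : ℤ) - (k + 1 : ℕ) - i) (by have := i.isLt; omega)]
    by_cases hik : μ ≤ i + k
    · rw [S2lem μ p hp0 c hc k i (le_of_lt hk) i.isLt hik]
      rw [if_neg (by omega), mul_zero, neg_zero, zero_add]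
      have harg : (i : ℤ) + ((k : ℕ) + 1 : ℕ) - μ - j = ((i + k + 1 - μ : ℕ) : ℤ) := by
        push_cast; omega
      rw [harg, extQ_ofNat]
      ring
    · have hS2 : ∑ m ∈ Finset.range μ, extQ c ((i : ℤ) + k - μ - m) * p.coeff (m + 1) = 0 := by
        refine Finset.sum_eq_zero fun m hm => ?_
        rw [Finset.mem_range] at hm
        rw [extQ_neg _ _ (by omega), zero_mul]
      rw [hS2, mul_zero, add_zero]
      by_cases heq : k + i + 1 = μ
      · rw [if_pos heq, mul_one]
        have harg : (i : ℤ) + ((k : ℕ) + 1 : ℕ) - μ - j = ((0 : ℕ) : ℤ) := by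
          push_cast; omega
        rw [harg, extQ_ofNat, hc0]
        ring
      · rw [if_neg heq, mul_zero, neg_zero, zero_sub,
          extQ_neg c ((i : ℤ) + ((k : ℕ) + 1 : ℕ) - μ - j) (by push_cast; omega)]
        ring
  · -- j ≠ 0 : shift
    have hj1 : (j : ℕ) - 1 < μ := by have := j.isLt; omega
    rw [Finset.sum_eq_single (⟨(j : ℕ) - 1, hj1⟩ : Fin μ)]
    · rw [if_neg hj, if_pos (by simp; omega), zero_add, mul_one]
      have h1 : ((⟨(j : ℕ) - 1, hj1⟩ : Fin μ) : ℤ) - k - i = (j : ℤ) - ((k : ℕ) + 1 : ℕ) - i := by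
        simp only [Fin.val_mk]
        push_cast
        omega
      have h2 : (i : ℤ) + k - μ - ((⟨(j : ℕ) - 1, hj1⟩ : Fin μ) : ℤ)
          = (i : ℤ) + ((k : ℕ) + 1 : ℕ) - μ - j := by
        simp only [Fin.val_mk]
        push_cast
        omega
      rw [h1, h2]
    · intro b _ hb
      rw [if_neg hj, if_neg, zero_add, mul_zero]
      intro hbc
      apply hb
      apply Fin.ext
      simp only [Fin.val_mk]
      omega
    · simp

/-- the general linear-algebraic identity. For any `p ∈ ℚ[t]` of degree
`μ ≥ 1` with `p(0) = 1` and `t^μ · p(1/t) = ε · p(t)` for some `ε ∈ {1, −1}` (i.e.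
`p.coeff (μ − i) = ε · p.coeff i` for all `i ≤ μ`), one has `χ · M₁^μ = −ε · χᵀ`. -/
theorem stmt_8 (μ : ℕ) (hμ : 1 ≤ μ) (p : Polynomial ℚ)
    (hdeg : p.natDegree = μ) (hp0 : p.coeff 0 = 1)
    (ε : ℚ) (hε : ε = 1 ∨ ε = -1)
    (hpal : ∀ i, i ≤ μ → p.coeff (μ - i) = ε * p.coeff i)
    (c : ℕ → ℚ)
    (hc : ∀ i, c i = PowerSeries.coeff i ((p : PowerSeries ℚ)⁻¹)) :
    chiMat μ c * (M1mat μ (fun i => p.coeff i)) ^ μ = (-ε) • (chiMat μ c)ᵀ := by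
  have key : ∀ n, n ≤ μ → chiMat μ c * (M1mat μ (fun i => p.coeff i)) ^ n = Amat μ n ε c := by
    intro n
    induction n with
    | zero => intro _; rw [pow_zero, mul_one, Amat_zero]
    | succ n ih =>
      intro hn
      rw [pow_succ, ← mul_assoc, ih (by omega), Amat_step μ p hp0 ε hpal c hc n (by omega)]
  rw [key μ le_rfl, Amat_mu]
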